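/- Every bimatrix game (R, C) with entries in [0,1] admits a (1/2 + δ)-well-supported Nash equilibrium (w, z) for any δ > 0 in which both w and z are ⌈2 ln(1/δ)/δ²⌉-uniform strategies, provided the game has a Nash equilibrium (x, y) with both payoffs at least 1/2; moreover supp(w) ⊆ supp(x) and supp(z) ⊆ supp(y). -/

import Mathlib

open Finset

/-- A mixed strategy: a probability vector over `Fin n`. -/
def isProb {n : ℕ} (x : Fin n → ℝ) : Prop := (∀ i, 0 ≤ x i) ∧ ∑ i, x i = 1

/-- Expected payoff `xᵀ A y`. -/
def pay {n : ℕ} (A : Matrix (Fin n) (Fin n) ℝ) (x y : Fin n → ℝ) : ℝ :=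
  ∑ i, ∑ j, x i * A i j * y j

/-- Payoff of pure row `i` against `y`: `(e_i)ᵀ A y`. -/
def rowPay {n : ℕ} (A : Matrix (Fin n) (Fin n) ℝ) (i : Fin n) (y : Fin n → ℝ) : ℝ :=
  ∑ j, A i j * y j

/-- Payoff of pure column `j` against `x`: `xᵀ A e_j`. -/
def colPay {n : ℕ} (A : Matrix (Fin n) (Fin n) ℝ) (x : Fin n → ℝ) (j : Fin n) : ℝ :=
  ∑ i, x i * A i j

/-- `(x, y)` is an ε-well-supported Nash equilibrium of the bimatrix game `(R, C)`. -/
def isWSNE {n : ℕ} (ε : ℝ) (R C : Matrix (Fin n) (Fin n) ℝ) (x y : Fin n → ℝ) : Prop :=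
  isProb x ∧ isProb y ∧
  (∀ i, 0 < x i → ∀ k, rowPay R i y ≥ rowPay R k y - ε) ∧
  (∀ j, 0 < y j → ∀ k, colPay C x j ≥ colPay C x k - ε)

/-- `(x, y)` is a Nash equilibrium of the zero-sum game `(R, -R)`:
`x` maximizes `x'ᵀ R y` and `y` minimizes `xᵀ R y'`. -/
def zeroSumNE_R {n : ℕ} (R : Matrix (Fin n) (Fin n) ℝ) (x y : Fin n → ℝ) : Prop :=
  isProb x ∧ isProb y ∧
  (∀ x', isProb x' → pay R x' y ≤ pay R x y) ∧
  (∀ y', isProb y' → pay R x y ≤ pay R x y')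

/-- `(x, y)` is a Nash equilibrium of the zero-sum game `(-C, C)`:
`x` minimizes `x'ᵀ C y` and `y` maximizes `xᵀ C y'`. -/
def zeroSumNE_C {n : ℕ} (C : Matrix (Fin n) (Fin n) ℝ) (x y : Fin n → ℝ) : Prop :=
  isProb x ∧ isProb y ∧
  (∀ x', isProb x' → pay C x y ≤ pay C x' y) ∧
  (∀ y', isProb y' → pay C x y' ≤ pay C x y)

/-- A `k`-uniform strategy: every probability is a multiple of `1/k`. -/
def kUniform {n : ℕ} (k : ℕ) (x : Fin n → ℝ) : Prop :=
  ∀ i, ∃ m : ℕ, x i * k = m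

/-! ### Auxiliary lemmas -/

private lemma sum_prod_fn {n k : ℕ} (F : Fin k → Fin n → ℝ) :
    ∑ g : Fin k → Fin n, ∏ s, F s (g s) = ∏ s, ∑ j, F s j :=
  (Fintype.prod_sum F).symm

private lemma sum_prod_const {n k : ℕ} (h : Fin n → ℝ) :
    ∑ g : Fin k → Fin n, ∏ s, h (g s) = (∑ j, h j) ^ k :=
  (Fintype.sum_pow h k).symm

private lemma ite_nonneg' {c : Prop} [Decidable c] {a : ℝ} (ha : 0 ≤ a) :
    0 ≤ if c then a else 0 := by
  by_cases h : c
  · rwa [if_pos h]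
  · rw [if_neg h]

private lemma ite_mul_pull {c : Prop} [Decidable c] (a b : ℝ) :
    (if c then a * b else 0) = a * (if c then b else 0) := by
  by_cases h : c
  · rw [if_pos h, if_pos h]
  · rw [if_neg h, if_neg h, mul_zero]

private lemma ite_mul_pull' {c : Prop} [Decidable c] (a b : ℝ) :
    (if c then a * b else 0) = b * (if c then a else 0) := by
  rw [mul_comm a b]; exact ite_mul_pull b a

private lemma numeric_bound {δ : ℝ} (hδ : 0 < δ) (hδ2 : δ < 1/2) (k : ℕ)
    (hkL : 2 * Real.log (1/δ) / δ^2 ≤ (k:ℝ))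
    (hkL1 : (k:ℝ) < 2 * Real.log (1/δ) / δ^2 + 1) :
    2 * (k:ℝ) * Real.exp (-(2*δ^2) * k) < 1 := by
  have hkR : (0:ℝ) ≤ k := Nat.cast_nonneg k
  set E := Real.exp (-(2*δ^2) * k) with hEdef
  have hEpos : 0 < E := Real.exp_pos _
  have hEδ : E ≤ δ^4 := by
    have hlogδ : Real.log (1/δ) = - Real.log δ := by rw [one_div, Real.log_inv]
    have h2 : -(2*δ^2) * (2 * Real.log (1/δ) / δ^2) = Real.log (δ^4) := by
      rw [Real.log_pow, hlogδ]
      have hδ2' : δ^2 ≠ 0 := by positivity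
      field_simp
      ring
    have h1 : -(2*δ^2) * (k:ℝ) ≤ Real.log (δ^4) := by
      rw [← h2]
      apply mul_le_mul_of_nonpos_left hkL (by nlinarith : -(2*δ^2) ≤ 0)
    calc E ≤ Real.exp (Real.log (δ^4)) := Real.exp_le_exp.2 h1
      _ = δ^4 := Real.exp_log (by positivity)
  have h2kE : 2*(k:ℝ)*E ≤ 2*(k:ℝ)*δ^4 := by nlinarith [hEpos.le, hkR]
  have h2kδ : 2*(k:ℝ)*δ^4 < 2*(2 * Real.log (1/δ) / δ^2 + 1)*δ^4 := by
    have hδ4 : (0:ℝ) < δ^4 := by positivity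
    nlinarith [hkL1, hδ4]
  have hfin : 2*(2 * Real.log (1/δ) / δ^2 + 1)*δ^4 ≤ 1 := by
    set s := Real.sqrt δ with hsdef
    have hs0 : 0 < s := Real.sqrt_pos.2 hδ
    have hs2 : s^2 = δ := Real.sq_sqrt hδ.le
    have hkey : s * Real.log (1/δ) ≤ 2 - 2*s := by
      have h1 : (1:ℝ)/δ = (1/s)^2 := by
        rw [div_pow, one_pow, hs2]
      have h3 : Real.log (1/δ) = 2 * Real.log (1/s) := by
        rw [h1, Real.log_pow]; norm_num
      have h4 : Real.log (1/s) ≤ 1/s - 1 :=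
        Real.log_le_sub_one_of_pos (by positivity)
      have h6 : s * Real.log (1/s) ≤ s * (1/s - 1) :=
        mul_le_mul_of_nonneg_left h4 hs0.le
      have h7 : s * (1/s - 1) = 1 - s := by field_simp
      calc s * Real.log (1/δ) = 2 * (s * Real.log (1/s)) := by rw [h3]; ring
        _ ≤ 2 * (1 - s) := by rw [← h7]; linarith
        _ = 2 - 2*s := by ring
    have hs12 : s^2 < 1/2 := by rw [hs2]; exact hδ2
    have heq : 2*(2 * Real.log (1/δ) / δ^2 + 1)*δ^4
        = 4 * Real.log (1/δ) * δ^2 + 2*δ^4 := by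
      have hδ2' : δ^2 ≠ 0 := by positivity
      field_simp
      ring
    have hδs4 : δ^2 = s^4 := by rw [← hs2]; ring
    have hδs8 : δ^4 = s^8 := by rw [← hs2]; ring
    rw [heq, hδs4, hδs8]
    have hmul : (s * Real.log (1/δ)) * s^3 ≤ (2 - 2*s) * s^3 :=
      mul_le_mul_of_nonneg_right hkey (by positivity)
    have hpoly : 8*s^3 - 8*s^4 + 2*s^8 < 1 := by
      nlinarith [sq_nonneg s, sq_nonneg (s-1), sq_nonneg (s^2 - 1/2),
        sq_nonneg (s^3), sq_nonneg (s^4-s^3), pow_pos hs0 3, pow_pos hs0 4]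
    nlinarith [hmul, hpoly]
  linarith

private lemma sum_swap3 {α β γ : Type*} [Fintype α] [Fintype β] [Fintype γ]
    (F : α → β → γ → ℝ) :
    ∑ a : α, ∑ b : β, ∑ c : γ, F a b c = ∑ c : γ, ∑ a : α, ∑ b : β, F a b c := by
  have h1 : ∀ a, ∑ b : β, ∑ c : γ, F a b c = ∑ c : γ, ∑ b : β, F a b c :=
    fun a => Finset.sum_comm
  calc ∑ a : α, ∑ b : β, ∑ c : γ, F a b c
      = ∑ a : α, ∑ c : γ, ∑ b : β, F a b c := Finset.sum_congr rfl fun a _ => h1 a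
    _ = ∑ c : γ, ∑ a : α, ∑ b : β, F a b c := Finset.sum_comm

private lemma convex_exp_bound (lam v : ℝ) (h0 : 0 ≤ v) (h1 : v ≤ 1) :
    Real.exp (-(lam * v)) ≤ 1 - v + v * Real.exp (-lam) := by
  have h := convexOn_exp.2 (Set.mem_univ (0:ℝ)) (Set.mem_univ (-lam))
    (by linarith : (0:ℝ) ≤ 1 - v) h0 (by ring)
  simp only [smul_eq_mul, mul_zero, Real.exp_zero, mul_one, zero_add, mul_neg] at h
  rw [mul_comm lam v]; exact h

private lemma key_factor (δ : ℝ) : Real.exp (4*δ*(1/2 - δ)) * ((1 + Real.exp (-(4*δ)))/2)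
    ≤ Real.exp (-(2*δ^2)) := by
  have hcosh := Real.cosh_le_exp_half_sq (2*δ)
  rw [Real.cosh_eq] at hcosh
  have e1 : ∀ a b : ℝ, Real.exp a * Real.exp b = Real.exp (a+b) :=
    fun a b => (Real.exp_add a b).symm
  have h2 : Real.exp (4*δ*(1/2 - δ)) * ((1 + Real.exp (-(4*δ)))/2)
      = Real.exp (-(4*δ^2)) * ((Real.exp (2*δ) + Real.exp (-(2*δ)))/2) := by
    have h4 : Real.exp (4*δ*(1/2 - δ)) = Real.exp (-(4*δ^2)) * Real.exp (2*δ) := by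
      rw [e1]; congr 1; ring
    rw [h4]
    have h3 : Real.exp (2*δ) * Real.exp (-(4*δ)) = Real.exp (-(2*δ)) := by
      rw [e1]; congr 1; ring
    rw [← h3]; ring
  rw [h2]
  calc Real.exp (-(4*δ^2)) * ((Real.exp (2*δ) + Real.exp (-(2*δ)))/2)
      ≤ Real.exp (-(4*δ^2)) * Real.exp ((2*δ)^2/2) := by
        apply mul_le_mul_of_nonneg_left hcosh (Real.exp_pos _).le
    _ = Real.exp (-(2*δ^2)) := by rw [e1]; congr 1; ring

private lemma chernoff {n k : ℕ} {δ : ℝ} (hδ : 0 < δ)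
    (p v : Fin n → ℝ) (hp0 : ∀ j, 0 ≤ p j) (hp1 : ∑ j, p j = 1)
    (hv : ∀ j, 0 ≤ v j ∧ v j ≤ 1) (hm : 1/2 ≤ ∑ j, p j * v j) :
    ∑ g : Fin k → Fin n, (if (∑ s, v (g s)) < k * (1/2 - δ) then ∏ s, p (g s) else 0)
      ≤ Real.exp (-(2*δ^2) * k) := by
  classical
  set a : ℝ := 1/2 - δ with ha
  have hprodnn : ∀ g : Fin k → Fin n, 0 ≤ ∏ s, p (g s) :=
    fun g => Finset.prod_nonneg fun s _ => hp0 _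
  have step1 : ∀ g : Fin k → Fin n,
      (if (∑ s, v (g s)) < k * a then ∏ s, p (g s) else 0)
        ≤ (∏ s, p (g s)) * Real.exp (4*δ*(k*a - ∑ s, v (g s))) := by
    intro g
    by_cases h : (∑ s, v (g s)) < k * a
    · simp only [h, if_true]
      nth_rewrite 1 [← mul_one (∏ s, p (g s))]
      apply mul_le_mul_of_nonneg_left _ (hprodnn g)
      rw [← Real.exp_zero]
      apply Real.exp_le_exp.2
      have h2 : 0 ≤ k*a - ∑ s, v (g s) := by linarith
      positivity
    · simp only [h, if_false]
      exact mul_nonneg (hprodnn g) (Real.exp_pos _).le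
  have step2 : ∑ g : Fin k → Fin n, (∏ s, p (g s)) * Real.exp (4*δ*(k*a - ∑ s, v (g s)))
      = Real.exp (4*δ*(k*a)) * (∑ j, p j * Real.exp (-(4*δ) * v j)) ^ k := by
    rw [← sum_prod_const (fun j => p j * Real.exp (-(4*δ) * v j)), Finset.mul_sum]
    apply Finset.sum_congr rfl
    intro g _
    have hS : ∑ s : Fin k, (-(4*δ) * v (g s)) = -(4*δ) * ∑ s, v (g s) :=
      (Finset.mul_sum _ _ _).symm
    rw [Finset.prod_mul_distrib, ← Real.exp_sum, hS,
      show 4*δ*(k*a - ∑ s, v (g s)) = 4*δ*(k*a) + (-(4*δ) * ∑ s, v (g s)) by ring,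
      Real.exp_add]
    ring
  have hE1 : Real.exp (-(4*δ)) ≤ 1 := by
    rw [Real.exp_le_one_iff]; linarith
  have step3 : ∑ j, p j * Real.exp (-(4*δ) * v j) ≤ (1 + Real.exp (-(4*δ)))/2 := by
    have h1 : ∑ j, p j * Real.exp (-(4*δ) * v j)
        ≤ ∑ j, p j * (1 - v j + v j * Real.exp (-(4*δ))) := by
      apply Finset.sum_le_sum; intro j _
      apply mul_le_mul_of_nonneg_left _ (hp0 j)
      have h3 := convex_exp_bound (4*δ) (v j) (hv j).1 (hv j).2
      calc Real.exp (-(4*δ) * v j) = Real.exp (-(4*δ * v j)) := by ring_nf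
        _ ≤ 1 - v j + v j * Real.exp (-(4*δ)) := h3
    have h2 : ∑ j, p j * (1 - v j + v j * Real.exp (-(4*δ)))
        = 1 - (∑ j, p j * v j) + (∑ j, p j * v j) * Real.exp (-(4*δ)) := by
      simp only [mul_add, mul_sub, mul_one, ← mul_assoc]
      rw [Finset.sum_add_distrib, Finset.sum_sub_distrib, hp1, ← Finset.sum_mul]
    rw [h2] at h1
    set m := ∑ j, p j * v j
    have h4 : 0 ≤ (1 - Real.exp (-(4*δ))) * (m - 1/2) :=
      mul_nonneg (by linarith) (by linarith)
    nlinarith [h1, h4]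
  have hβnn : (0:ℝ) ≤ ∑ j, p j * Real.exp (-(4*δ) * v j) :=
    Finset.sum_nonneg fun j _ => mul_nonneg (hp0 j) (Real.exp_pos _).le
  calc ∑ g : Fin k → Fin n, (if (∑ s, v (g s)) < k * a then ∏ s, p (g s) else 0)
      ≤ ∑ g : Fin k → Fin n, (∏ s, p (g s)) * Real.exp (4*δ*(k*a - ∑ s, v (g s))) :=
        Finset.sum_le_sum fun g _ => step1 g
    _ = Real.exp (4*δ*(k*a)) * (∑ j, p j * Real.exp (-(4*δ) * v j)) ^ k := step2
    _ ≤ Real.exp (4*δ*(k*a)) * ((1 + Real.exp (-(4*δ)))/2) ^ k := by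
        apply mul_le_mul_of_nonneg_left _ (Real.exp_pos _).le
        exact pow_le_pow_left₀ hβnn step3 k
    _ = (Real.exp (4*δ*a) * ((1 + Real.exp (-(4*δ)))/2)) ^ k := by
        rw [mul_pow, show 4*δ*(k*a) = (k:ℝ) * (4*δ*a) by ring, Real.exp_nat_mul]
    _ ≤ (Real.exp (-(2*δ^2))) ^ k := by
        apply pow_le_pow_left₀ (by positivity)
        exact key_factor δ
    _ = Real.exp (-(2*δ^2) * k) := by rw [← Real.exp_nat_mul]; ring_nf

private lemma marginal_eq {n k : ℕ} (p q : Fin n → ℝ) (hp1 : ∑ j, p j = 1) (t : Fin k) :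
    ∑ g : Fin k → Fin n, (∏ s, p (g s)) * q (g t) = ∑ j, p j * q j := by
  classical
  have h2 := sum_prod_fn (n := n) (k := k) (fun s j => p j * (if s = t then q j else 1))
  simp only [mul_ite, mul_one] at h2
  have h1 : ∀ g : Fin k → Fin n, (∏ s, p (g s)) * q (g t)
      = ∏ s, (if s = t then p (g s) * q (g s) else p (g s)) := by
    intro g
    have h5 : ∀ s : Fin k, (if s = t then p (g s) * q (g s) else p (g s))
        = p (g s) * (if s = t then q (g s) else 1) := by
      intro s; by_cases h : s = t <;> simp [h]
    simp only [h5]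
    rw [Finset.prod_mul_distrib, Finset.prod_ite_eq' Finset.univ t (fun s => q (g s))]
    simp
  simp only [h1]
  rw [h2]
  have h3 : ∀ s : Fin k, (∑ j, if s = t then p j * q j else p j)
      = (if s = t then ∑ j, p j * q j else 1) := by
    intro s; by_cases h : s = t <;> simp [h, hp1]
  simp only [h3]
  rw [Finset.prod_ite_eq' Finset.univ t (fun _ => ∑ j, p j * q j)]
  simp

/-- the empirical distribution of a tuple of samples -/
private noncomputable def emp {n : ℕ} {k : ℕ} (g : Fin k → Fin n) : Fin n → ℝ :=
  fun j => (∑ t, if g t = j then (1:ℝ) else 0) / k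

private lemma emp_nonneg {n k : ℕ} (g : Fin k → Fin n) (j : Fin n) : 0 ≤ emp g j := by
  unfold emp
  apply div_nonneg _ (Nat.cast_nonneg k)
  apply Finset.sum_nonneg; intro t _; positivity

private lemma emp_isProb {n k : ℕ} (hk : k ≠ 0) (g : Fin k → Fin n) : isProb (emp g) := by
  refine ⟨emp_nonneg g, ?_⟩
  unfold emp
  rw [← Finset.sum_div, Finset.sum_comm]
  have h1 : ∀ t : Fin k, (∑ j, if g t = j then (1:ℝ) else 0) = 1 := by
    intro t; rw [Finset.sum_ite_eq Finset.univ (g t) (fun _ => (1:ℝ))]; simp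
  simp only [h1, Finset.sum_const, Finset.card_univ, Fintype.card_fin, nsmul_eq_mul, mul_one]
  field_simp

private lemma emp_kUniform {n k : ℕ} (hk : k ≠ 0) (g : Fin k → Fin n) : kUniform k (emp g) := by
  intro j
  refine ⟨(Finset.univ.filter (fun t => g t = j)).card, ?_⟩
  unfold emp
  rw [div_mul_cancel₀]
  · rw [Finset.sum_boole]
  · exact_mod_cast hk

private lemma emp_supp {n k : ℕ} (g : Fin k → Fin n) (j : Fin n) (h : 0 < emp g j) :
    ∃ t, g t = j := by
  by_contra hc
  push_neg at hc
  have h0 : emp g j = 0 := by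
    unfold emp
    rw [Finset.sum_eq_zero, zero_div]
    intro t _; simp [hc t]
  linarith

private lemma rowPay_emp {n k : ℕ} (R : Matrix (Fin n) (Fin n) ℝ) (i : Fin n)
    (g : Fin k → Fin n) : rowPay R i (emp g) = (∑ s, R i (g s)) / k := by
  unfold rowPay emp
  simp only [← mul_div_assoc, Finset.mul_sum, mul_ite, mul_one, mul_zero]
  rw [← Finset.sum_div]
  congr 1
  rw [Finset.sum_comm]
  apply Finset.sum_congr rfl
  intro t _
  rw [Finset.sum_ite_eq Finset.univ (g t) (fun j => R i j)]
  simp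

private lemma colPay_emp {n k : ℕ} (C : Matrix (Fin n) (Fin n) ℝ) (j : Fin n)
    (f : Fin k → Fin n) : colPay C (emp f) j = (∑ s, C (f s) j) / k := by
  unfold colPay emp
  simp only [div_mul_eq_mul_div, Finset.sum_mul, ite_mul, one_mul, zero_mul]
  rw [← Finset.sum_div]
  congr 1
  rw [Finset.sum_comm]
  apply Finset.sum_congr rfl
  intro t _
  rw [Finset.sum_ite_eq Finset.univ (f t) (fun i => C i j)]
  simp

private lemma pure_isProb {n : ℕ} (i0 : Fin n) :
    isProb (fun i => if i = i0 then (1:ℝ) else 0) := by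
  constructor
  · intro i; by_cases h : i = i0 <;> simp [h]
  · rw [Finset.sum_ite_eq' Finset.univ i0 (fun _ => (1:ℝ))]; simp

private lemma supp_rowPay {n : ℕ} (R : Matrix (Fin n) (Fin n) ℝ) (x y : Fin n → ℝ)
    (hx : isProb x) (hNE : ∀ x', isProb x' → pay R x' y ≤ pay R x y)
    (hv : pay R x y ≥ 1/2) (i : Fin n) (hi : 0 < x i) : 1/2 ≤ rowPay R i y := by
  classical
  have hrow : ∀ i', rowPay R i' y ≤ pay R x y := by
    intro i'
    have h := hNE _ (pure_isProb i')
    have he : pay R (fun i'' => if i'' = i' then (1:ℝ) else 0) y = rowPay R i' y := by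
      unfold pay
      have h2 : ∀ i'', (∑ j, (if i'' = i' then (1:ℝ) else 0) * R i'' j * y j)
          = if i'' = i' then rowPay R i'' y else 0 := by
        intro i''; by_cases h : i'' = i' <;> simp [h, rowPay]
      simp only [h2]
      rw [Finset.sum_ite_eq' Finset.univ i' (fun i'' => rowPay R i'' y)]; simp
    rwa [he] at h
  have hpay : pay R x y = ∑ i', x i' * rowPay R i' y := by
    unfold pay rowPay
    apply Finset.sum_congr rfl; intro i' _
    rw [Finset.mul_sum]
    apply Finset.sum_congr rfl; intro j _; ring
  by_contra hc
  push_neg at hc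
  have hlt : ∑ i', x i' * rowPay R i' y < ∑ i', x i' * pay R x y := by
    apply Finset.sum_lt_sum
    · intro i' _; exact mul_le_mul_of_nonneg_left (hrow i') (hx.1 i')
    · exact ⟨i, Finset.mem_univ i, by
        apply mul_lt_mul_of_pos_left _ hi
        linarith⟩
  rw [← Finset.sum_mul, hx.2, one_mul, ← hpay] at hlt
  exact lt_irrefl _ hlt

private lemma supp_colPay {n : ℕ} (C : Matrix (Fin n) (Fin n) ℝ) (x y : Fin n → ℝ)
    (hy : isProb y) (hNE : ∀ y', isProb y' → pay C x y' ≤ pay C x y)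
    (hv : pay C x y ≥ 1/2) (j : Fin n) (hj : 0 < y j) : 1/2 ≤ colPay C x j := by
  classical
  have hcol : ∀ j', colPay C x j' ≤ pay C x y := by
    intro j'
    have h := hNE _ (pure_isProb j')
    have he : pay C x (fun j'' => if j'' = j' then (1:ℝ) else 0) = colPay C x j' := by
      unfold pay
      have h2 : ∀ i, (∑ j'', x i * C i j'' * (if j'' = j' then (1:ℝ) else 0))
          = x i * C i j' := by
        intro i
        have h3 : ∀ j'', x i * C i j'' * (if j'' = j' then (1:ℝ) else 0)
            = if j'' = j' then x i * C i j'' else 0 := by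
          intro j''; by_cases h : j'' = j' <;> simp [h]
        simp only [h3]
        rw [Finset.sum_ite_eq' Finset.univ j' (fun j'' => x i * C i j'')]; simp
      simp only [h2]; rfl
    rwa [he] at h
  have hpay : pay C x y = ∑ j', y j' * colPay C x j' := by
    unfold pay colPay
    rw [Finset.sum_comm]
    apply Finset.sum_congr rfl; intro j' _
    rw [Finset.mul_sum]
    apply Finset.sum_congr rfl; intro i _; ring
  by_contra hc
  push_neg at hc
  have hlt : ∑ j', y j' * colPay C x j' < ∑ j', y j' * pay C x y := by
    apply Finset.sum_lt_sum
    · intro j' _; exact mul_le_mul_of_nonneg_left (hcol j') (hy.1 j')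
    · exact ⟨j, Finset.mem_univ j, by
        apply mul_lt_mul_of_pos_left _ hj
        linarith⟩
  rw [← Finset.sum_mul, hy.2, one_mul, ← hpay] at hlt
  exact lt_irrefl _ hlt

private lemma rowPay_le_one {n : ℕ} (R : Matrix (Fin n) (Fin n) ℝ)
    (hR : ∀ i j, R i j ∈ Set.Icc (0:ℝ) 1) (i : Fin n) (z : Fin n → ℝ) (hz : isProb z) :
    rowPay R i z ≤ 1 := by
  unfold rowPay
  calc ∑ j, R i j * z j ≤ ∑ j, z j :=
        Finset.sum_le_sum fun j _ => mul_le_of_le_one_left (hz.1 j) (hR i j).2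
    _ = 1 := hz.2

private lemma rowPay_nonneg {n : ℕ} (R : Matrix (Fin n) (Fin n) ℝ)
    (hR : ∀ i j, R i j ∈ Set.Icc (0:ℝ) 1) (i : Fin n) (z : Fin n → ℝ) (hz : isProb z) :
    0 ≤ rowPay R i z :=
  Finset.sum_nonneg fun j _ => mul_nonneg (hR i j).1 (hz.1 j)

private lemma colPay_le_one {n : ℕ} (C : Matrix (Fin n) (Fin n) ℝ)
    (hC : ∀ i j, C i j ∈ Set.Icc (0:ℝ) 1) (w : Fin n → ℝ) (hw : isProb w) (j : Fin n) :
    colPay C w j ≤ 1 := by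
  unfold colPay
  calc ∑ i, w i * C i j ≤ ∑ i, w i :=
        Finset.sum_le_sum fun i _ => mul_le_of_le_one_right (hw.1 i) (hC i j).2
    _ = 1 := hw.2

private lemma colPay_nonneg {n : ℕ} (C : Matrix (Fin n) (Fin n) ℝ)
    (hC : ∀ i j, C i j ∈ Set.Icc (0:ℝ) 1) (w : Fin n → ℝ) (hw : isProb w) (j : Fin n) :
    0 ≤ colPay C w j :=
  Finset.sum_nonneg fun i _ => mul_nonneg (hw.1 i) (hC i j).1

/-- if `(R, C)` has a Nash equilibrium `(x, y)` giving both players payoff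
at least 1/2, then for every `δ > 0` there is a `(1/2+δ)`-WSNE `(w, z)` in which both
strategies are `⌈2 ln(1/δ)/δ²⌉`-uniform and `supp(w) ⊆ supp(x)`, `supp(z) ⊆ supp(y)`. -/
theorem stmt16 {n : ℕ} (R C : Matrix (Fin n) (Fin n) ℝ)
    (hR : ∀ i j, R i j ∈ Set.Icc (0:ℝ) 1) (hC : ∀ i j, C i j ∈ Set.Icc (0:ℝ) 1)
    (δ : ℝ) (hδ : 0 < δ)
    (x y : Fin n → ℝ)
    (hx : isProb x) (hy : isProb y)
    (hrowNE : ∀ x', isProb x' → pay R x' y ≤ pay R x y)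
    (hcolNE : ∀ y', isProb y' → pay C x y' ≤ pay C x y)
    (hvR : pay R x y ≥ 1/2) (hvC : pay C x y ≥ 1/2) :
    ∃ w z : Fin n → ℝ,
      kUniform ⌈2 * Real.log (1/δ) / δ^2⌉₊ w ∧
      kUniform ⌈2 * Real.log (1/δ) / δ^2⌉₊ z ∧
      (∀ i, 0 < w i → 0 < x i) ∧ (∀ j, 0 < z j → 0 < y j) ∧
      isWSNE (1/2 + δ) R C w z := by
  classical
  set k := ⌈2 * Real.log (1/δ) / δ^2⌉₊ with hkdef
  obtain ⟨i0, hi0⟩ : ∃ i, 0 < x i := by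
    by_contra hc; push_neg at hc
    have h0 : ∑ i, x i = 0 :=
      Finset.sum_eq_zero fun i _ => le_antisymm (hc i) (hx.1 i)
    rw [hx.2] at h0; norm_num at h0
  obtain ⟨j0, hj0⟩ : ∃ j, 0 < y j := by
    by_contra hc; push_neg at hc
    have h0 : ∑ j, y j = 0 :=
      Finset.sum_eq_zero fun j _ => le_antisymm (hc j) (hy.1 j)
    rw [hy.2] at h0; norm_num at h0
  by_cases hδ2 : 1/2 ≤ δ
  · -- Easy case: `ε = 1/2 + δ ≥ 1`, any pure profile on the supports works.
    refine ⟨(fun i => if i = i0 then 1 else 0), (fun j => if j = j0 then 1 else 0),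
      ?_, ?_, ?_, ?_, pure_isProb i0, pure_isProb j0, ?_, ?_⟩
    · intro i; by_cases h : i = i0
      · exact ⟨k, by simp [h]⟩
      · exact ⟨0, by simp [h]⟩
    · intro j; by_cases h : j = j0
      · exact ⟨k, by simp [h]⟩
      · exact ⟨0, by simp [h]⟩
    · intro i hi; by_cases h : i = i0
      · subst h; exact hi0
      · simp [h] at hi
    · intro j hj; by_cases h : j = j0
      · subst h; exact hj0
      · simp [h] at hj
    · intro i _ k'
      have h1 := rowPay_le_one R hR k' _ (pure_isProb j0)
      have h2 := rowPay_nonneg R hR i _ (pure_isProb j0)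
      simp only [ge_iff_le]
      linarith
    · intro j _ k'
      have h1 := colPay_le_one C hC _ (pure_isProb i0) k'
      have h2 := colPay_nonneg C hC _ (pure_isProb i0) j
      simp only [ge_iff_le]
      linarith
  · -- Main case: `δ < 1/2`; sample `k` pure strategies from each of `x` and `y`.
    push_neg at hδ2
    have hδ1 : δ < 1 := by linarith
    have hlog : 0 < Real.log (1/δ) := Real.log_pos (by rw [lt_div_iff₀ hδ]; linarith)
    have hL : 0 < 2 * Real.log (1/δ) / δ^2 := by positivity
    have hkL : 2 * Real.log (1/δ) / δ^2 ≤ (k:ℝ) := Nat.le_ceil _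
    have hkL1 : (k:ℝ) < 2 * Real.log (1/δ) / δ^2 + 1 := Nat.ceil_lt_add_one hL.le
    have hkpos : 0 < k := Nat.ceil_pos.2 hL
    have hk0 : k ≠ 0 := hkpos.ne'
    have hkR : (0:ℝ) < k := by exact_mod_cast hkpos
    set E := Real.exp (-(2*δ^2) * k) with hEdef
    have hEpos : 0 < E := Real.exp_pos _
    -- the per-row and per-column Chernoff bounds
    have hqRbound : ∀ i, 0 < x i →
        (∑ g : Fin k → Fin n,
          (if (∑ s, R i (g s)) < (k:ℝ) * (1/2 - δ) then ∏ s, y (g s) else 0)) ≤ E := by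
      intro i hi
      have hmean : 1/2 ≤ ∑ j, y j * R i j := by
        have h := supp_rowPay R x y hx hrowNE hvR i hi
        unfold rowPay at h
        calc (1:ℝ)/2 ≤ ∑ j, R i j * y j := h
          _ = ∑ j, y j * R i j := by
              apply Finset.sum_congr rfl; intro j _; ring
      exact chernoff hδ y (fun j => R i j) hy.1 hy.2
        (fun j => ⟨(hR i j).1, (hR i j).2⟩) hmean
    have hqCbound : ∀ j, 0 < y j →
        (∑ f : Fin k → Fin n,
          (if (∑ s, C (f s) j) < (k:ℝ) * (1/2 - δ) then ∏ s, x (f s) else 0)) ≤ E := by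
      intro j hj
      have hmean : 1/2 ≤ ∑ i, x i * C i j :=
        supp_colPay C x y hy hcolNE hvC j hj
      exact chernoff hδ x (fun i => C i j) hx.1 hx.2
        (fun i => ⟨(hC i j).1, (hC i j).2⟩) hmean
    -- abbreviations
    set qR : Fin n → ℝ := fun i => ∑ g : Fin k → Fin n,
      (if (∑ s, R i (g s)) < (k:ℝ) * (1/2 - δ) then ∏ s, y (g s) else 0) with hqRdef
    set qC : Fin n → ℝ := fun j => ∑ f : Fin k → Fin n,
      (if (∑ s, C (f s) j) < (k:ℝ) * (1/2 - δ) then ∏ s, x (f s) else 0) with hqCdef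
    have hWxnn : ∀ f : Fin k → Fin n, 0 ≤ ∏ s, x (f s) :=
      fun f => Finset.prod_nonneg fun s _ => hx.1 _
    have hWynn : ∀ g : Fin k → Fin n, 0 ≤ ∏ s, y (g s) :=
      fun g => Finset.prod_nonneg fun s _ => hy.1 _
    have hqRnn : ∀ i, 0 ≤ qR i := by
      intro i; apply Finset.sum_nonneg; intro g _
      exact ite_nonneg' (hWynn g)
    have hqCnn : ∀ j, 0 ≤ qC j := by
      intro j; apply Finset.sum_nonneg; intro f _
      exact ite_nonneg' (hWxnn f)
    -- the `Good` event
    set Good : (Fin k → Fin n) → (Fin k → Fin n) → Prop := fun f g =>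
      (∀ t, (k:ℝ) * (1/2 - δ) ≤ ∑ s, R (f t) (g s)) ∧
      (∀ t, (k:ℝ) * (1/2 - δ) ≤ ∑ s, C (f s) (g t)) with hGooddef
    -- total probability is 1
    have htotx : ∑ f : Fin k → Fin n, ∏ s, x (f s) = 1 := by
      rw [sum_prod_const, hx.2, one_pow]
    have htoty : ∑ g : Fin k → Fin n, ∏ s, y (g s) = 1 := by
      rw [sum_prod_const, hy.2, one_pow]
    have hsum1 : ∑ f : Fin k → Fin n, ∑ g : Fin k → Fin n,
        (∏ s, x (f s)) * (∏ s, y (g s)) = 1 := by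
      rw [← Finset.sum_mul_sum, htotx, htoty, one_mul]
    -- union bound for the bad event
    have hbadR : ∑ t : Fin k, ∑ f : Fin k → Fin n, ∑ g : Fin k → Fin n,
        (if (∑ s, R (f t) (g s)) < (k:ℝ) * (1/2 - δ)
          then (∏ s, x (f s)) * (∏ s, y (g s)) else 0) ≤ k * E := by
      have hblock : ∀ t : Fin k, ∑ f : Fin k → Fin n, ∑ g : Fin k → Fin n,
          (if (∑ s, R (f t) (g s)) < (k:ℝ) * (1/2 - δ)
            then (∏ s, x (f s)) * (∏ s, y (g s)) else 0) ≤ E := by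
        intro t
        have hinner : ∀ f : Fin k → Fin n, ∑ g : Fin k → Fin n,
            (if (∑ s, R (f t) (g s)) < (k:ℝ) * (1/2 - δ)
              then (∏ s, x (f s)) * (∏ s, y (g s)) else 0)
            = (∏ s, x (f s)) * qR (f t) := by
          intro f
          simp only [hqRdef]
          rw [Finset.mul_sum]
          apply Finset.sum_congr rfl; intro g _
          exact ite_mul_pull _ _
        calc ∑ f : Fin k → Fin n, ∑ g : Fin k → Fin n,
              (if (∑ s, R (f t) (g s)) < (k:ℝ) * (1/2 - δ)
                then (∏ s, x (f s)) * (∏ s, y (g s)) else 0)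
            = ∑ f : Fin k → Fin n, (∏ s, x (f s)) * qR (f t) := by
              apply Finset.sum_congr rfl; intro f _; exact hinner f
          _ = ∑ i, x i * qR i := marginal_eq x qR hx.2 t
          _ ≤ ∑ i, x i * E := by
              apply Finset.sum_le_sum; intro i _
              rcases (hx.1 i).eq_or_lt with h | h
              · rw [← h]; simp
              · simp only [hqRdef]
                exact mul_le_mul_of_nonneg_left (hqRbound i h) (hx.1 i)
          _ = E := by rw [← Finset.sum_mul, hx.2, one_mul]
      calc ∑ t : Fin k, ∑ f : Fin k → Fin n, ∑ g : Fin k → Fin n,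
            (if (∑ s, R (f t) (g s)) < (k:ℝ) * (1/2 - δ)
              then (∏ s, x (f s)) * (∏ s, y (g s)) else 0)
          ≤ ∑ _t : Fin k, E := Finset.sum_le_sum fun t _ => hblock t
        _ = k * E := by
            rw [Finset.sum_const, Finset.card_univ, Fintype.card_fin, nsmul_eq_mul]
    have hbadC : ∑ t : Fin k, ∑ f : Fin k → Fin n, ∑ g : Fin k → Fin n,
        (if (∑ s, C (f s) (g t)) < (k:ℝ) * (1/2 - δ)
          then (∏ s, x (f s)) * (∏ s, y (g s)) else 0) ≤ k * E := by
      have hblock : ∀ t : Fin k, ∑ f : Fin k → Fin n, ∑ g : Fin k → Fin n,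
          (if (∑ s, C (f s) (g t)) < (k:ℝ) * (1/2 - δ)
            then (∏ s, x (f s)) * (∏ s, y (g s)) else 0) ≤ E := by
        intro t
        have hinner : ∀ g : Fin k → Fin n, ∑ f : Fin k → Fin n,
            (if (∑ s, C (f s) (g t)) < (k:ℝ) * (1/2 - δ)
              then (∏ s, x (f s)) * (∏ s, y (g s)) else 0)
            = (∏ s, y (g s)) * qC (g t) := by
          intro g
          simp only [hqCdef]
          rw [Finset.mul_sum]
          apply Finset.sum_congr rfl; intro f _
          exact ite_mul_pull' _ _
        calc ∑ f : Fin k → Fin n, ∑ g : Fin k → Fin n,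
              (if (∑ s, C (f s) (g t)) < (k:ℝ) * (1/2 - δ)
                then (∏ s, x (f s)) * (∏ s, y (g s)) else 0)
            = ∑ g : Fin k → Fin n, ∑ f : Fin k → Fin n,
              (if (∑ s, C (f s) (g t)) < (k:ℝ) * (1/2 - δ)
                then (∏ s, x (f s)) * (∏ s, y (g s)) else 0) := Finset.sum_comm
          _ = ∑ g : Fin k → Fin n, (∏ s, y (g s)) * qC (g t) := by
              apply Finset.sum_congr rfl; intro g _; exact hinner g
          _ = ∑ j, y j * qC j := marginal_eq y qC hy.2 t
          _ ≤ ∑ j, y j * E := by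
              apply Finset.sum_le_sum; intro j _
              rcases (hy.1 j).eq_or_lt with h | h
              · rw [← h]; simp
              · simp only [hqCdef]
                exact mul_le_mul_of_nonneg_left (hqCbound j h) (hy.1 j)
          _ = E := by rw [← Finset.sum_mul, hy.2, one_mul]
      calc ∑ t : Fin k, ∑ f : Fin k → Fin n, ∑ g : Fin k → Fin n,
            (if (∑ s, C (f s) (g t)) < (k:ℝ) * (1/2 - δ)
              then (∏ s, x (f s)) * (∏ s, y (g s)) else 0)
          ≤ ∑ _t : Fin k, E := Finset.sum_le_sum fun t _ => hblock t
        _ = k * E := by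
            rw [Finset.sum_const, Finset.card_univ, Fintype.card_fin, nsmul_eq_mul]
    -- pointwise union bound
    have hpoint : ∀ f g : Fin k → Fin n,
        (if ¬ Good f g then (∏ s, x (f s)) * (∏ s, y (g s)) else 0)
        ≤ (∑ t : Fin k, if (∑ s, R (f t) (g s)) < (k:ℝ) * (1/2 - δ)
            then (∏ s, x (f s)) * (∏ s, y (g s)) else 0)
          + (∑ t : Fin k, if (∑ s, C (f s) (g t)) < (k:ℝ) * (1/2 - δ)
            then (∏ s, x (f s)) * (∏ s, y (g s)) else 0) := by
      intro f g
      have hPnn : 0 ≤ (∏ s, x (f s)) * (∏ s, y (g s)) :=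
        mul_nonneg (hWxnn f) (hWynn g)
      have hnn1 : 0 ≤ ∑ t : Fin k, if (∑ s, R (f t) (g s)) < (k:ℝ) * (1/2 - δ)
          then (∏ s, x (f s)) * (∏ s, y (g s)) else 0 := by
        apply Finset.sum_nonneg; intro t _
        exact ite_nonneg' hPnn
      have hnn2 : 0 ≤ ∑ t : Fin k, if (∑ s, C (f s) (g t)) < (k:ℝ) * (1/2 - δ)
          then (∏ s, x (f s)) * (∏ s, y (g s)) else 0 := by
        apply Finset.sum_nonneg; intro t _
        exact ite_nonneg' hPnn
      by_cases h : Good f g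
      · rw [if_neg (not_not_intro h)]; linarith
      · rw [if_pos h]
        rw [hGooddef] at h
        rcases not_and_or.1 h with h1 | h1
        · push_neg at h1
          obtain ⟨t0, hlt⟩ := h1
          have h5 : (∏ s, x (f s)) * (∏ s, y (g s))
              ≤ ∑ t : Fin k, if (∑ s, R (f t) (g s)) < (k:ℝ) * (1/2 - δ)
                then (∏ s, x (f s)) * (∏ s, y (g s)) else 0 := by
            calc (∏ s, x (f s)) * (∏ s, y (g s))
                = (if (∑ s, R (f t0) (g s)) < (k:ℝ) * (1/2 - δ)
                    then (∏ s, x (f s)) * (∏ s, y (g s)) else 0) := (if_pos hlt).symm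
              _ ≤ _ := Finset.single_le_sum (f := fun t =>
                  if (∑ s, R (f t) (g s)) < (k:ℝ) * (1/2 - δ)
                    then (∏ s, x (f s)) * (∏ s, y (g s)) else 0)
                  (fun t _ => ite_nonneg' hPnn) (Finset.mem_univ t0)
          linarith
        · push_neg at h1
          obtain ⟨t0, hlt⟩ := h1
          have h5 : (∏ s, x (f s)) * (∏ s, y (g s))
              ≤ ∑ t : Fin k, if (∑ s, C (f s) (g t)) < (k:ℝ) * (1/2 - δ)
                then (∏ s, x (f s)) * (∏ s, y (g s)) else 0 := by
            calc (∏ s, x (f s)) * (∏ s, y (g s))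
                = (if (∑ s, C (f s) (g t0)) < (k:ℝ) * (1/2 - δ)
                    then (∏ s, x (f s)) * (∏ s, y (g s)) else 0) := (if_pos hlt).symm
              _ ≤ _ := Finset.single_le_sum (f := fun t =>
                  if (∑ s, C (f s) (g t)) < (k:ℝ) * (1/2 - δ)
                    then (∏ s, x (f s)) * (∏ s, y (g s)) else 0)
                  (fun t _ => ite_nonneg' hPnn) (Finset.mem_univ t0)
          linarith
    -- total bad probability
    have hbad : ∑ f : Fin k → Fin n, ∑ g : Fin k → Fin n,
        (if ¬ Good f g then (∏ s, x (f s)) * (∏ s, y (g s)) else 0) ≤ 2 * k * E := by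
      calc ∑ f : Fin k → Fin n, ∑ g : Fin k → Fin n,
            (if ¬ Good f g then (∏ s, x (f s)) * (∏ s, y (g s)) else 0)
          ≤ ∑ f : Fin k → Fin n, ∑ g : Fin k → Fin n,
            ((∑ t : Fin k, if (∑ s, R (f t) (g s)) < (k:ℝ) * (1/2 - δ)
              then (∏ s, x (f s)) * (∏ s, y (g s)) else 0)
            + (∑ t : Fin k, if (∑ s, C (f s) (g t)) < (k:ℝ) * (1/2 - δ)
              then (∏ s, x (f s)) * (∏ s, y (g s)) else 0)) := by
            apply Finset.sum_le_sum; intro f _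
            apply Finset.sum_le_sum; intro g _
            exact hpoint f g
        _ = (∑ f : Fin k → Fin n, ∑ g : Fin k → Fin n, ∑ t : Fin k,
              if (∑ s, R (f t) (g s)) < (k:ℝ) * (1/2 - δ)
                then (∏ s, x (f s)) * (∏ s, y (g s)) else 0)
            + (∑ f : Fin k → Fin n, ∑ g : Fin k → Fin n, ∑ t : Fin k,
              if (∑ s, C (f s) (g t)) < (k:ℝ) * (1/2 - δ)
                then (∏ s, x (f s)) * (∏ s, y (g s)) else 0) := by
            rw [← Finset.sum_add_distrib]
            apply Finset.sum_congr rfl; intro f _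
            rw [← Finset.sum_add_distrib]
        _ ≤ k * E + k * E := by
            apply add_le_add
            · calc (∑ f : Fin k → Fin n, ∑ g : Fin k → Fin n, ∑ t : Fin k,
                  if (∑ s, R (f t) (g s)) < (k:ℝ) * (1/2 - δ)
                    then (∏ s, x (f s)) * (∏ s, y (g s)) else 0)
                  = ∑ t : Fin k, ∑ f : Fin k → Fin n, ∑ g : Fin k → Fin n,
                    (if (∑ s, R (f t) (g s)) < (k:ℝ) * (1/2 - δ)
                      then (∏ s, x (f s)) * (∏ s, y (g s)) else 0) :=
                    sum_swap3 _
                _ ≤ k * E := hbadR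
            · calc (∑ f : Fin k → Fin n, ∑ g : Fin k → Fin n, ∑ t : Fin k,
                  if (∑ s, C (f s) (g t)) < (k:ℝ) * (1/2 - δ)
                    then (∏ s, x (f s)) * (∏ s, y (g s)) else 0)
                  = ∑ t : Fin k, ∑ f : Fin k → Fin n, ∑ g : Fin k → Fin n,
                    (if (∑ s, C (f s) (g t)) < (k:ℝ) * (1/2 - δ)
                      then (∏ s, x (f s)) * (∏ s, y (g s)) else 0) :=
                    sum_swap3 _
                _ ≤ k * E := hbadC
        _ = 2 * k * E := by ring
    -- the numeric bound `2 k E < 1`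
    have hnum : 2 * (k:ℝ) * E < 1 := numeric_bound hδ hδ2 k hkL hkL1
    -- split the total probability and find a good pair
    have hsplit : ∑ f : Fin k → Fin n, ∑ g : Fin k → Fin n,
        (∏ s, x (f s)) * (∏ s, y (g s))
        = (∑ f : Fin k → Fin n, ∑ g : Fin k → Fin n,
            (if Good f g then (∏ s, x (f s)) * (∏ s, y (g s)) else 0))
          + (∑ f : Fin k → Fin n, ∑ g : Fin k → Fin n,
            (if ¬ Good f g then (∏ s, x (f s)) * (∏ s, y (g s)) else 0)) := by
      rw [← Finset.sum_add_distrib]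
      apply Finset.sum_congr rfl; intro f _
      rw [← Finset.sum_add_distrib]
      apply Finset.sum_congr rfl; intro g _
      by_cases h : Good f g
      · rw [if_pos h, if_neg (not_not_intro h), add_zero]
      · rw [if_neg h, if_pos h, zero_add]
    have hgoodpos : 0 < ∑ f : Fin k → Fin n, ∑ g : Fin k → Fin n,
        (if Good f g then (∏ s, x (f s)) * (∏ s, y (g s)) else 0) := by
      have := hsum1
      rw [hsplit] at this
      linarith
    obtain ⟨f, g, hGood, hPpos⟩ : ∃ f g : Fin k → Fin n,
        Good f g ∧ 0 < (∏ s, x (f s)) * (∏ s, y (g s)) := by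
      by_contra hc
      push_neg at hc
      have hz : ∀ f g : Fin k → Fin n,
          (if Good f g then (∏ s, x (f s)) * (∏ s, y (g s)) else 0) ≤ 0 := by
        intro f g
        by_cases h : Good f g
        · rw [if_pos h]; exact hc f g h
        · rw [if_neg h]
      have hle : ∑ f : Fin k → Fin n, ∑ g : Fin k → Fin n,
          (if Good f g then (∏ s, x (f s)) * (∏ s, y (g s)) else 0) ≤ 0 :=
        Finset.sum_nonpos fun f _ => Finset.sum_nonpos fun g _ => hz f g
      linarith
    -- the sampled strategies
    have hWx : 0 < ∏ s, x (f s) := by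
      rcases (hWxnn f).eq_or_lt with h | h
      · exfalso; rw [← h, zero_mul] at hPpos; exact lt_irrefl _ hPpos
      · exact h
    have hWy : 0 < ∏ s, y (g s) := by
      rcases (hWynn g).eq_or_lt with h | h
      · exfalso; rw [← h, mul_zero] at hPpos; exact lt_irrefl _ hPpos
      · exact h
    have hxf : ∀ t, 0 < x (f t) := by
      intro t
      rcases (hx.1 (f t)).eq_or_lt with h | h
      · exfalso
        have : ∏ s, x (f s) = 0 :=
          Finset.prod_eq_zero (Finset.mem_univ t) h.symm
        rw [this] at hWx; exact lt_irrefl _ hWx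
      · exact h
    have hyg : ∀ t, 0 < y (g t) := by
      intro t
      rcases (hy.1 (g t)).eq_or_lt with h | h
      · exfalso
        have : ∏ s, y (g s) = 0 :=
          Finset.prod_eq_zero (Finset.mem_univ t) h.symm
        rw [this] at hWy; exact lt_irrefl _ hWy
      · exact h
    refine ⟨emp f, emp g, emp_kUniform hk0 f, emp_kUniform hk0 g, ?_, ?_,
      emp_isProb hk0 f, emp_isProb hk0 g, ?_, ?_⟩
    · intro i hi
      obtain ⟨t, ht⟩ := emp_supp f i hi
      rw [← ht]; exact hxf t
    · intro j hj
      obtain ⟨t, ht⟩ := emp_supp g j hj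
      rw [← ht]; exact hyg t
    · intro i hi k'
      obtain ⟨t, ht⟩ := emp_supp f i hi
      have h1 : (k:ℝ) * (1/2 - δ) ≤ ∑ s, R (f t) (g s) := hGood.1 t
      rw [ht] at h1
      have h2 : 1/2 - δ ≤ rowPay R i (emp g) := by
        rw [rowPay_emp, le_div_iff₀ hkR]
        linarith [h1]
      have h3 : rowPay R k' (emp g) ≤ 1 := rowPay_le_one R hR k' _ (emp_isProb hk0 g)
      simp only [ge_iff_le]
      linarith
    · intro j hj k'
      obtain ⟨t, ht⟩ := emp_supp g j hj
      have h1 : (k:ℝ) * (1/2 - δ) ≤ ∑ s, C (f s) (g t) := hGood.2 t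
      rw [ht] at h1
      have h2 : 1/2 - δ ≤ colPay C (emp f) j := by
        rw [colPay_emp, le_div_iff₀ hkR]
        linarith [h1]
      have h3 : colPay C (emp f) k' ≤ 1 := colPay_le_one C hC _ (emp_isProb hk0 f) k'
      simp only [ge_iff_le]
      linarith
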